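/- The following are equivalent: (1) the space ℕ* admits a family of ℵ₁ many zero-sets whose union is ℕ* such that no countable subfamily has union ℕ*; (2) there exists a family A(α,n) (for α < ω₁ and n ∈ ℕ) of infinite subsets of ℕ such that (a) for every countable set C of ordinals below ω₁ there is a function f : C → ℕ such that the family {A(α, f(α)) : α ∈ C} has the strong finite intersection property, and (b) there is no function f : ω₁ → ℕ such that the family {A(α, f(α)) : α < ω₁} has the strong finite intersection property. -/

import Mathlib

open Set Ordinal

open scoped Classical

section StoneCechHelpers

/-- Extension of the indicator function of `S ⊆ ℕ` to `βℕ`, valued in `[0,1]`. -/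
noncomputable def chiExt0 (S : Set ℕ) : StoneCech ℕ → unitInterval :=
  stoneCechExtend (g := S.indicator fun _ => (1 : unitInterval))
    continuous_of_discreteTopology

/-- Real-valued extension of the indicator function of `S ⊆ ℕ` to `βℕ`. -/
noncomputable def chiExt (S : Set ℕ) : StoneCech ℕ → ℝ :=
  fun x => (chiExt0 S x : ℝ)

lemma chiExt_continuous (S : Set ℕ) : Continuous (chiExt S) :=
  continuous_subtype_val.comp (continuous_stoneCechExtend _)

lemma chiExt_unit (S : Set ℕ) (k : ℕ) :
    chiExt S (stoneCechUnit k) = if k ∈ S then 1 else 0 := by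
  have h := congrFun (stoneCechExtend_extends
    (g := S.indicator fun _ => (1 : unitInterval)) continuous_of_discreteTopology) k
  simp only [Function.comp_apply] at h
  unfold chiExt chiExt0
  rw [h]
  by_cases hk : k ∈ S
  · simp [Set.indicator_of_mem hk, hk]
  · simp [Set.indicator_of_notMem hk, hk]

lemma chiExt_binary (S : Set ℕ) (x : StoneCech ℕ) : chiExt S x = 0 ∨ chiExt S x = 1 := by
  have hcl : IsClosed {y : StoneCech ℕ | chiExt S y = 0 ∨ chiExt S y = 1} := by
    have : {y : StoneCech ℕ | chiExt S y = 0 ∨ chiExt S y = 1}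
        = chiExt S ⁻¹' ({0, 1} : Set ℝ) := by ext y; simp [Set.mem_preimage]
    rw [this]
    exact (isClosed_singleton.union isClosed_singleton).preimage (chiExt_continuous S)
  have hr : Set.range (stoneCechUnit : ℕ → StoneCech ℕ)
      ⊆ {y : StoneCech ℕ | chiExt S y = 0 ∨ chiExt S y = 1} := by
    rintro _ ⟨k, rfl⟩
    rw [Set.mem_setOf_eq, chiExt_unit]
    by_cases hk : k ∈ S <;> simp [hk]
  have hd := denseRange_stoneCechUnit (α := ℕ)
  have huniv : closure (Set.range (stoneCechUnit : ℕ → StoneCech ℕ)) = Set.univ := hd.closure_eq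
  have hs : (Set.univ : Set (StoneCech ℕ)) ⊆ {y | chiExt S y = 0 ∨ chiExt S y = 1} := by
    rw [← huniv]; exact hcl.closure_subset_iff.mpr hr
  exact hs (Set.mem_univ x)

lemma mem_closure_iff_chi (S : Set ℕ) (x : StoneCech ℕ) :
    x ∈ closure (stoneCechUnit '' S) ↔ chiExt S x = 1 := by
  constructor
  · intro hx
    have hcl : IsClosed {y : StoneCech ℕ | chiExt S y = 1} :=
      isClosed_singleton.preimage (chiExt_continuous S)
    have hsub : stoneCechUnit '' S ⊆ {y | chiExt S y = 1} := by
      rintro _ ⟨k, hk, rfl⟩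
      simp [chiExt_unit, hk]
    exact hcl.closure_subset_iff.mpr hsub hx
  · intro hx
    rw [mem_closure_iff]
    intro o ho hxo
    have hV : IsOpen (o ∩ chiExt S ⁻¹' (Set.Ioi (1/2 : ℝ))) :=
      ho.inter (isOpen_Ioi.preimage (chiExt_continuous S))
    have hxV : x ∈ o ∩ chiExt S ⁻¹' (Set.Ioi (1/2 : ℝ)) := by
      refine ⟨hxo, ?_⟩
      simp only [Set.mem_preimage, Set.mem_Ioi, hx]
      norm_num
    obtain ⟨k, hk⟩ := denseRange_stoneCechUnit.exists_mem_open hV ⟨x, hxV⟩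
    have hkS : k ∈ S := by
      by_contra hkS
      have := hk.2
      simp only [Set.mem_preimage, Set.mem_Ioi, chiExt_unit, hkS, if_false] at this
      norm_num at this
    exact ⟨stoneCechUnit k, hk.1, ⟨k, hkS, rfl⟩⟩

lemma isOpen_closure_unit_image (S : Set ℕ) :
    IsOpen (closure (stoneCechUnit '' S)) := by
  have : closure (stoneCechUnit '' S) = chiExt S ⁻¹' (Set.Ioi (1/2 : ℝ)) := by
    ext x
    rw [mem_closure_iff_chi]
    simp only [Set.mem_preimage, Set.mem_Ioi]
    constructor
    · intro h; rw [h]; norm_num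
    · intro h
      rcases chiExt_binary S x with h0 | h1
      · rw [h0] at h; norm_num at h
      · exact h1
  rw [this]
  exact isOpen_Ioi.preimage (chiExt_continuous S)

lemma stoneCechUnit_inj : Function.Injective (stoneCechUnit : ℕ → StoneCech ℕ) := by
  intro a b hab
  have h := congrArg (chiExt ({a} : Set ℕ)) hab
  rw [chiExt_unit, chiExt_unit] at h
  simp only [Set.mem_singleton_iff, if_pos rfl] at h
  by_contra hne
  rw [if_neg (Ne.symm hne)] at h
  norm_num at h

lemma isOpen_range_stoneCechUnit : IsOpen (Set.range (stoneCechUnit : ℕ → StoneCech ℕ)) := by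
  have h1 : ∀ k : ℕ, IsOpen ({stoneCechUnit k} : Set (StoneCech ℕ)) := by
    intro k
    have : ({stoneCechUnit k} : Set (StoneCech ℕ)) = closure (stoneCechUnit '' {k}) := by
      rw [Set.image_singleton]
      exact (closure_singleton).symm
    rw [this]
    exact isOpen_closure_unit_image {k}
  have : Set.range (stoneCechUnit : ℕ → StoneCech ℕ) = ⋃ k, {stoneCechUnit k} := by
    ext x; simp [Set.mem_range, eq_comm]
  rw [this]
  exact isOpen_iUnion h1

lemma mem_closure_inter {S T : Set ℕ} {x : StoneCech ℕ}
    (hS : x ∈ closure (stoneCechUnit '' S)) (hT : x ∈ closure (stoneCechUnit '' T)) :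
    x ∈ closure (stoneCechUnit '' (S ∩ T)) := by
  rw [mem_closure_iff]
  intro o ho hxo
  have hV : IsOpen (o ∩ closure (stoneCechUnit '' T)) := ho.inter (isOpen_closure_unit_image T)
  have hxV : x ∈ o ∩ closure (stoneCechUnit '' T) := ⟨hxo, hT⟩
  rw [mem_closure_iff] at hS
  obtain ⟨y, ⟨hyo, hyT⟩, k, hkS, rfl⟩ := hS _ hV hxV
  have hkT : k ∈ T := by
    rw [mem_closure_iff_chi, chiExt_unit] at hyT
    by_contra hkT
    rw [if_neg hkT] at hyT
    norm_num at hyT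
  exact ⟨stoneCechUnit k, hyo, ⟨k, ⟨hkS, hkT⟩, rfl⟩⟩

lemma mem_closure_biInter {ι : Type*} (F : Finset ι) (S : ι → Set ℕ) {x : StoneCech ℕ}
    (hx : ∀ i ∈ F, x ∈ closure (stoneCechUnit '' S i)) :
    x ∈ closure (stoneCechUnit '' ⋂ i ∈ F, S i) := by
  classical
  induction F using Finset.induction_on with
  | empty =>
      simp only [Finset.notMem_empty, Set.iInter_of_empty, Set.iInter_univ, Set.image_univ]
      rw [denseRange_stoneCechUnit.closure_eq]
      exact Set.mem_univ x
  | insert a F' hni ih =>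
      rw [Finset.set_biInter_insert]
      exact mem_closure_inter (hx a (Finset.mem_insert_self a F'))
        (ih fun i hi => hx i (Finset.mem_insert_of_mem hi))

lemma infinite_exists_remainder {S : Set ℕ} (hS : S.Infinite) :
    ∃ x : StoneCech ℕ, x ∉ Set.range (stoneCechUnit : ℕ → StoneCech ℕ) ∧
      x ∈ closure (stoneCechUnit '' S) := by
  by_contra h
  push_neg at h
  have hsub : closure (stoneCechUnit '' S) ⊆ Set.range (stoneCechUnit : ℕ → StoneCech ℕ) := by
    intro x hx
    by_contra hxr
    exact (h x hxr) hx
  have hcomp : IsCompact (closure (stoneCechUnit '' S)) := isClosed_closure.isCompact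
  have hcov : closure (stoneCechUnit '' S) ⊆ ⋃ k : ℕ, ({stoneCechUnit k} : Set (StoneCech ℕ)) := by
    intro x hx
    obtain ⟨k, rfl⟩ := hsub hx
    exact Set.mem_iUnion.mpr ⟨k, rfl⟩
  have hopen : ∀ k : ℕ, IsOpen ({stoneCechUnit k} : Set (StoneCech ℕ)) := by
    intro k
    have : ({stoneCechUnit k} : Set (StoneCech ℕ)) = closure (stoneCechUnit '' {k}) := by
      rw [Set.image_singleton, closure_singleton]
    rw [this]; exact isOpen_closure_unit_image {k}
  obtain ⟨t, ht⟩ := hcomp.elim_finite_subcover _ hopen hcov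
  have himg : stoneCechUnit '' S ⊆ ⋃ k ∈ t, ({stoneCechUnit k} : Set (StoneCech ℕ)) :=
    subset_closure.trans ht
  have hSfin : S.Finite := by
    have : S ⊆ ↑t := by
      intro k hk
      have := himg ⟨k, hk, rfl⟩
      simp only [Set.mem_iUnion, Set.mem_singleton_iff] at this
      obtain ⟨j, hj, hkj⟩ := this
      exact (stoneCechUnit_inj hkj) ▸ hj
    exact (t.finite_toSet).subset this
  exact hS hSfin

lemma remainder_mem_infinite {S : Set ℕ} {x : StoneCech ℕ}
    (hxr : x ∉ Set.range (stoneCechUnit : ℕ → StoneCech ℕ))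
    (hx : x ∈ closure (stoneCechUnit '' S)) : S.Infinite := by
  intro hfin
  have : (stoneCechUnit '' S).Finite := hfin.image _
  rw [this.isClosed.closure_eq] at hx
  obtain ⟨k, _, rfl⟩ := hx
  exact hxr ⟨k, rfl⟩

lemma sfip_exists_remainder {ι : Type*} (S : ι → Set ℕ)
    (h : ∀ F : Finset ι, (⋂ i ∈ F, S i).Infinite) :
    ∃ x : StoneCech ℕ, x ∉ Set.range (stoneCechUnit : ℕ → StoneCech ℕ) ∧
      ∀ i, x ∈ closure (stoneCechUnit '' S i) := by
  classical
  have hK : IsCompact ((Set.range (stoneCechUnit : ℕ → StoneCech ℕ))ᶜ) :=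
    (isOpen_range_stoneCechUnit.isClosed_compl).isCompact
  by_contra hc
  push_neg at hc
  have hempty : (Set.range (stoneCechUnit : ℕ → StoneCech ℕ))ᶜ
      ∩ ⋂ i, closure (stoneCechUnit '' S i) = ∅ := by
    ext x
    simp only [Set.mem_inter_iff, Set.mem_compl_iff, Set.mem_iInter, Set.mem_empty_iff_false,
      iff_false, not_and]
    intro hxr hall
    obtain ⟨i, hi⟩ := hc x hxr
    exact hi (hall i)
  obtain ⟨F, hF⟩ := hK.elim_finite_subfamily_closed _ (fun i => isClosed_closure) hempty
  obtain ⟨x, hxr, hxcl⟩ := infinite_exists_remainder (h F)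
  have hall : x ∈ ⋂ i ∈ F, closure (stoneCechUnit '' S i) := by
    rw [Set.mem_iInter₂]
    intro i hi
    exact closure_mono (Set.image_mono (Set.biInter_subset_of_mem hi)) hxcl
  have : x ∈ (Set.range (stoneCechUnit : ℕ → StoneCech ℕ))ᶜ
      ∩ ⋂ i ∈ F, closure (stoneCechUnit '' S i) := ⟨hxr, hall⟩
  rw [hF] at this
  exact this

end StoneCechHelpers

/-- An index type of cardinality `ℵ₁`: the countable ordinals. -/
abbrev Omega1Index : Type 1 := {o : Ordinal // o < Ordinal.omega 1}

/-- `ℕ*`, the Stone–Čech remainder of the discrete space `ℕ`. -/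
abbrev NStar : Type := ((Set.range (stoneCechUnit : ℕ → StoneCech ℕ))ᶜ : Set (StoneCech ℕ))

section Series

lemma series_bound (B : ℕ → Set ℕ) (n : ℕ) (x : StoneCech ℕ) :
    ‖(1/2 : ℝ)^n * chiExt (B n) x‖ ≤ (1/2 : ℝ)^n := by
  rcases chiExt_binary (B n) x with h | h
  · simp only [h, mul_zero, norm_zero]
    positivity
  · simp only [h, mul_one, Real.norm_eq_abs]
    rw [abs_of_nonneg (by positivity)]

lemma series_nonneg (B : ℕ → Set ℕ) (n : ℕ) (x : StoneCech ℕ) :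
    0 ≤ (1/2 : ℝ)^n * chiExt (B n) x := by
  rcases chiExt_binary (B n) x with h | h <;> simp [h]

lemma series_summable (B : ℕ → Set ℕ) (x : StoneCech ℕ) :
    Summable (fun n => (1/2 : ℝ)^n * chiExt (B n) x) := by
  refine Summable.of_nonneg_of_le (fun n => series_nonneg B n x) (fun n => ?_)
    summable_geometric_two
  have := series_bound B n x
  rwa [Real.norm_eq_abs, abs_of_nonneg (series_nonneg B n x)] at this

lemma series_continuous (B : ℕ → Set ℕ) :
    Continuous (fun x : StoneCech ℕ => ∑' n, (1/2 : ℝ)^n * chiExt (B n) x) :=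
  continuous_tsum (fun n => continuous_const.mul (chiExt_continuous (B n)))
    summable_geometric_two (fun n x => series_bound B n x)

lemma series_eq_zero_iff (B : ℕ → Set ℕ) (x : StoneCech ℕ) :
    (∑' n, (1/2 : ℝ)^n * chiExt (B n) x) = 0 ↔
      ∀ n, x ∉ closure (stoneCechUnit '' B n) := by
  constructor
  · intro h n hn
    rw [mem_closure_iff_chi] at hn
    have hpos : 0 < ∑' n, (1/2 : ℝ)^n * chiExt (B n) x := by
      refine Summable.tsum_pos (series_summable B x) (fun n => series_nonneg B n x) n ?_
      rw [hn, mul_one]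
      positivity
    rw [h] at hpos
    exact lt_irrefl 0 hpos
  · intro h
    have hz : ∀ n, (1/2 : ℝ)^n * chiExt (B n) x = 0 := by
      intro n
      rcases chiExt_binary (B n) x with h0 | h1
      · rw [h0, mul_zero]
      · exact absurd ((mem_closure_iff_chi _ _).mpr h1) (h n)
    have hfz : (fun n => (1/2 : ℝ)^n * chiExt (B n) x) = fun _ => 0 := funext hz
    rw [hfz, tsum_zero]

end Series

/-- `ℕ*` has a cover by `ℵ₁` many zero-sets with no countable subcover if and only if
there is an `ω₁ × ω` matrix `A(α,n)` of infinite subsets of `ℕ` such that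
(a) for every countable `C ⊆ ω₁` some selector `f` makes `{A(α, f α) : α ∈ C}` have the
strong finite intersection property, and
(b) no selector `f` makes the whole family `{A(α, f α) : α < ω₁}` have the strong finite
intersection property. -/
theorem cover_of_NStar_iff_matrix :
    (∃ Z : Omega1Index → Set NStar,
      (∀ α, ∃ g : C(NStar, ℝ), Z α = g ⁻¹' {0}) ∧ (⋃ α, Z α) = Set.univ ∧
      ¬ ∃ C : Set Omega1Index, C.Countable ∧ (⋃ α ∈ C, Z α) = Set.univ)
    ↔
    (∃ A : Omega1Index → ℕ → Set ℕ,
      (∀ α n, (A α n).Infinite) ∧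
      (∀ C : Set Omega1Index, C.Countable →
        ∃ f : Omega1Index → ℕ, ∀ F : Finset Omega1Index, ↑F ⊆ C →
          (⋂ α ∈ F, A α (f α)).Infinite) ∧
      ¬ ∃ f : Omega1Index → ℕ, ∀ F : Finset Omega1Index,
          (⋂ α ∈ F, A α (f α)).Infinite) := by
  constructor
  · -- Forward direction
    rintro ⟨Z, hzero, hcov, hnc⟩
    choose g hg using hzero
    have hclosed : IsClosed ((Set.range (stoneCechUnit : ℕ → StoneCech ℕ))ᶜ) :=
      isOpen_range_stoneCechUnit.isClosed_compl
    choose G hGr using fun α => ContinuousMap.exists_restrict_eq (Y := ℝ) hclosed (g α)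
    have hGg : ∀ α (x : NStar), G α (↑x : StoneCech ℕ) = g α x := by
      intro α x
      have h1 := ContinuousMap.congr_fun (hGr α) x
      simpa [ContinuousMap.restrict_apply] using h1
    -- The raw matrix
    set A0 : Omega1Index → ℕ → Set ℕ :=
      fun α n => {k | 1/((n : ℝ)+1) ≤ |G α (stoneCechUnit k)|} with hA0
    have hmono : ∀ α (n m : ℕ), n ≤ m → A0 α n ⊆ A0 α m := by
      intro α n m hnm k hk
      simp only [hA0, Set.mem_setOf_eq] at hk ⊢
      refine le_trans ?_ hk
      apply one_div_le_one_div_of_le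
      · positivity
      · exact_mod_cast Nat.add_le_add_right hnm 1
    have hmemcl : ∀ α (n : ℕ) (x : StoneCech ℕ), 1/((n : ℝ)+1) < |G α x| →
        x ∈ closure (stoneCechUnit '' A0 α n) := by
      intro α n x hx
      rw [mem_closure_iff]
      intro o ho hxo
      have hV : IsOpen (o ∩ {y | 1/((n : ℝ)+1) < |G α y|}) :=
        ho.inter (isOpen_lt continuous_const (continuous_abs.comp (G α).continuous))
      obtain ⟨k, hk1, hk2⟩ := denseRange_stoneCechUnit.exists_mem_open hV ⟨x, hxo, hx⟩
      exact ⟨stoneCechUnit k, hk1, ⟨k, by simp only [hA0, Set.mem_setOf_eq]; exact le_of_lt hk2, rfl⟩⟩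
    have hclbound : ∀ α (n : ℕ) (x : StoneCech ℕ), x ∈ closure (stoneCechUnit '' A0 α n) →
        1/((n : ℝ)+1) ≤ |G α x| := by
      intro α n x hx
      have hcl : IsClosed {y : StoneCech ℕ | 1/((n : ℝ)+1) ≤ |G α y|} :=
        isClosed_le continuous_const (continuous_abs.comp (G α).continuous)
      have hsub : stoneCechUnit '' A0 α n ⊆ {y | 1/((n : ℝ)+1) ≤ |G α y|} := by
        rintro _ ⟨k, hk, rfl⟩
        simp only [hA0, Set.mem_setOf_eq] at hk
        exact hk
      exact hcl.closure_subset_iff.mpr hsub hx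
    have hex : ∀ α, ∃ n, (A0 α n).Infinite := by
      intro α
      by_contra hno
      push_neg at hno
      apply hnc
      refine ⟨{α}, Set.countable_singleton α, ?_⟩
      rw [Set.eq_univ_iff_forall]
      intro x
      rw [Set.mem_iUnion₂]
      refine ⟨α, rfl, ?_⟩
      rw [hg α, Set.mem_preimage, Set.mem_singleton_iff]
      by_contra hgx
      have hpos : 0 < |g α x| := abs_pos.mpr hgx
      obtain ⟨n, hn⟩ := exists_nat_one_div_lt hpos
      have hxcl := hmemcl α n (↑x) (by rw [hGg]; exact_mod_cast hn)
      exact (remainder_mem_infinite x.2 hxcl) (hno n)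
    have hAinf : ∀ α n, (A0 α (max n (hex α).choose)).Infinite :=
      fun α n => ((hex α).choose_spec).mono (hmono α _ _ (le_max_right _ _))
    set A : Omega1Index → ℕ → Set ℕ := fun α n => A0 α (max n (hex α).choose) with hA
    have hK : ∀ α (x : NStar), g α x ≠ 0 ↔
        ∃ n, (↑x : StoneCech ℕ) ∈ closure (stoneCechUnit '' A α n) := by
      intro α x
      constructor
      · intro hgx
        have hpos : 0 < |g α x| := abs_pos.mpr hgx
        obtain ⟨n, hn⟩ := exists_nat_one_div_lt hpos
        refine ⟨n, ?_⟩
        have h1 := hmemcl α n (↑x) (by rw [hGg]; exact_mod_cast hn)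
        exact closure_mono (Set.image_mono (hmono α _ _ (le_max_left _ _))) h1
      · rintro ⟨n, hn⟩
        have h1 := hclbound α (max n (hex α).choose) (↑x) hn
        rw [hGg] at h1
        intro h0
        rw [h0, abs_zero] at h1
        have hp : (0 : ℝ) < 1/(((max n (hex α).choose : ℕ) : ℝ)+1) := by positivity
        exact absurd h1 (not_le.mpr hp)
    refine ⟨A, hAinf, ?_, ?_⟩
    · -- (a)
      intro C hCc
      have hne : (⋃ α ∈ C, Z α) ≠ Set.univ := fun h => hnc ⟨C, hCc, h⟩
      obtain ⟨x, hx⟩ := (Set.ne_univ_iff_exists_notMem _).mp hne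
      have hxz : ∀ α ∈ C, g α x ≠ 0 := by
        intro α hα h0
        apply hx
        rw [Set.mem_iUnion₂]
        exact ⟨α, hα, by rw [hg α, Set.mem_preimage, Set.mem_singleton_iff]; exact h0⟩
      refine ⟨fun α => if h : α ∈ C then ((hK α x).mp (hxz α h)).choose else 0, ?_⟩
      intro F hF
      have hxcl : ∀ α ∈ F, (↑x : StoneCech ℕ) ∈ closure (stoneCechUnit ''
          A α (if h : α ∈ C then ((hK α x).mp (hxz α h)).choose else 0)) := by
        intro α hα
        have hαC : α ∈ C := hF hα
        rw [dif_pos hαC]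
        exact ((hK α x).mp (hxz α hαC)).choose_spec
      exact remainder_mem_infinite x.2 (mem_closure_biInter F _ hxcl)
    · -- (b)
      rintro ⟨f, hf⟩
      obtain ⟨x, hxr, hxcl⟩ := sfip_exists_remainder (fun α => A α (f α)) hf
      have hx : (⟨x, hxr⟩ : NStar) ∈ ⋃ α, Z α := by
        rw [hcov]; exact Set.mem_univ _
      rw [Set.mem_iUnion] at hx
      obtain ⟨β, hβ⟩ := hx
      rw [hg β, Set.mem_preimage, Set.mem_singleton_iff] at hβ
      exact ((hK β ⟨x, hxr⟩).mpr ⟨f β, hxcl β⟩) hβ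
  · -- Backward direction
    rintro ⟨A, hAinf, ha, hb⟩
    refine ⟨fun α => (⟨fun x : NStar => ∑' n, (1/2 : ℝ)^n * chiExt (A α n) (↑x : StoneCech ℕ),
      (series_continuous (A α)).comp continuous_subtype_val⟩ : C(NStar, ℝ)) ⁻¹' {0},
      fun α => ⟨_, rfl⟩, ?_, ?_⟩
    · -- cover
      rw [Set.eq_univ_iff_forall]
      intro x
      rw [Set.mem_iUnion]
      by_contra hc
      push_neg at hc
      have hsel : ∀ α, ∃ n, (↑x : StoneCech ℕ) ∈ closure (stoneCechUnit '' A α n) := by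
        intro α
        by_contra hno
        push_neg at hno
        apply hc α
        rw [Set.mem_preimage, ContinuousMap.coe_mk, Set.mem_singleton_iff]
        exact (series_eq_zero_iff (A α) (↑x)).mpr hno
      choose f hfsel using hsel
      apply hb
      refine ⟨f, fun F => ?_⟩
      exact remainder_mem_infinite x.2 (mem_closure_biInter F _ (fun α _ => hfsel α))
    · -- no countable subcover
      rintro ⟨C, hCc, hCu⟩
      obtain ⟨f, hf⟩ := ha C hCc
      have hfi : ∀ Fu : Finset (↥C), (⋂ i ∈ Fu, A (↑i : Omega1Index) (f ↑i)).Infinite := by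
        intro Fu
        have hsub : (↑(Fu.image Subtype.val) : Set Omega1Index) ⊆ C := by
          intro β hβ
          rw [Finset.coe_image] at hβ
          obtain ⟨i, _, rfl⟩ := hβ
          exact i.2
        have h1 := hf _ hsub
        refine h1.mono ?_
        intro k hk
        rw [Set.mem_iInter₂] at hk ⊢
        intro i hi
        exact hk (↑i) (Finset.mem_image_of_mem _ hi)
      obtain ⟨x, hxr, hxcl⟩ :=
        sfip_exists_remainder (fun i : ↥C => A (↑i : Omega1Index) (f ↑i)) hfi
      rw [Set.eq_univ_iff_forall] at hCu
      have hx := hCu ⟨x, hxr⟩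
      rw [Set.mem_iUnion₂] at hx
      obtain ⟨β, hβC, hβ⟩ := hx
      rw [Set.mem_preimage, ContinuousMap.coe_mk, Set.mem_singleton_iff] at hβ
      exact ((series_eq_zero_iff (A β) x).mp hβ (f β)) (hxcl ⟨β, hβC⟩)
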